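/- arXiv:0810.0868 — 3 statements merged into one kernel-verified Lean document; each statement's English description precedes it below -/
import Mathlib

section
/- Let T ∈ BPT(n), rooted as described, and let v be an internal vertex with exactly one internal child v₁. Then for every s ≥ 1: R(v,s,0) = ∑_{k₁ ≥ 0} R(v₁, s−1, k₁), and for every k ≥ 1, R(v,s,k) = R(v₁, s, k−1) · (2k+1). -/
open scoped Classical

noncomputable section

/-- `b n = (2n-5)!!`, the number of fully resolved phylogenetic trees on `n` leaves. -/
def numBPT (n : ℕ) : ℕ := ∏ k ∈ Finset.Icc 3 n, (2 * k - 5)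

/-- `β m = b (m+3)`, the number of fully resolved phylogenetic trees with exactly `m`
internal edges. -/
def beta (m : ℕ) : ℕ := numBPT (m + 3)

/-- A rooted binary tree with leaves labelled by `α`: every internal vertex has exactly
two children.  This is the structure obtained from a fully resolved phylogenetic tree
`T ∈ BPT(n)` by deleting leaf `n` and rooting at the vertex `v₀` that was adjacent to
leaf `n`. -/
inductive RTree (α : Type) : Type
  | leaf (a : α) : RTree α
  | node (l r : RTree α) : RTree α

namespace RTree

variable {α : Type}

/-- `t` is an internal vertex (not a leaf). -/
def isNode : RTree α → Prop
  | leaf _ => False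
  | node _ _ => True

/-- The multiset of leaf labels of `t`. -/
def labels : RTree α → Multiset α
  | leaf a => {a}
  | node l r => labels l + labels r

/-- The subtree `T_v` consisting of a vertex `v` (addressed by the path `p` of
left/right choices from the root) and all of its descendants. -/
def subtreeAt : RTree α → List Bool → Option (RTree α)
  | t, [] => some t
  | leaf _, _ :: _ => none
  | node l r, b :: p => subtreeAt (if b then r else l) p

/-- The set of vertices of `t`, addressed by paths from the root. -/
def positions : RTree α → Finset (List Bool)
  | leaf _ => {[]}
  | node l r =>
      insert [] (((positions l).image (List.cons false)) ∪ ((positions r).image (List.cons true)))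

/-- `E̊(t)`: the internal edges of the rooted tree, i.e. the edges both of whose
endpoints are internal vertices.  An edge is addressed by the position of its lower
(child) endpoint, which must be a non-root internal vertex (its parent is automatically
internal). -/
def internalEdges (t : RTree α) : Finset (List Bool) :=
  (positions t).filter (fun p => p ≠ [] ∧ ∃ t', subtreeAt t p = some t' ∧ t'.isNode)

/-- One step of adjacency in the forest `t - E`: vertices `p` and `q` are joined by an
edge of the tree (one is the parent of the other) that has not been cut (is not in `E`). -/
def stepRel (E : Finset (List Bool)) (p q : List Bool) : Prop :=
  (q = p.dropLast ∧ p ≠ [] ∧ p ∉ E) ∨ (p = q.dropLast ∧ q ≠ [] ∧ q ∉ E)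

/-- The connected component of the forest `t - E` containing the vertex `p`. -/
def component (t : RTree α) (E : Finset (List Bool)) (p : List Bool) : Finset (List Bool) :=
  (positions t).filter (fun q => Relation.ReflTransGen (stepRel E) p q)

/-- The set of connected components `F₁, …, F_{|E|+1}` of the forest `t - E`. -/
def components (t : RTree α) (E : Finset (List Bool)) : Finset (Finset (List Bool)) :=
  (positions t).image (component t E)

/-- `|E̊(F)|`: the number of internal edges of the tree contained in (i.e. with both
endpoints in) the component `C` of the forest `t - E`. -/
def compEdgeCount (t : RTree α) (E : Finset (List Bool)) (C : Finset (List Bool)) : ℕ :=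
  ((internalEdges t).filter (fun p => p ∉ E ∧ p ∈ C)).card

/-- `N_E(T_v) = ∏ᵢ β(|E̊(Fᵢ)|)`, the product over the components of `T_v - E`. -/
def NEdges (t : RTree α) (E : Finset (List Bool)) : ℕ :=
  ∏ C ∈ components t E, beta (compEdgeCount t E C)

/-- `κ(v,E)`: the number of internal edges in the component of `T_v - E` containing
the root `v` of `T_v`. -/
def kappa (t : RTree α) (E : Finset (List Bool)) : ℕ :=
  compEdgeCount t E (component t E [])

/-- `R(v,s,k) = ∑_{E ⊆ E̊(T_v), |E| = s, κ(v,E) = k} N_E(T_v)`. -/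
def R (t : RTree α) (s k : ℕ) : ℕ :=
  ∑ E ∈ (internalEdges t).powerset.filter (fun E => E.card = s ∧ kappa t E = k),
    NEdges t E

end RTree

end

open RTree
namespace RTree

variable {α : Type}

/-- The longest prefix of `l` that lies in `E` (or `[]` if none does). -/
def anchor (E : Finset (List Bool)) (l : List Bool) : List Bool :=
  if h : l = [] then [] else if l ∈ E then l else anchor E l.dropLast
termination_by l.length
decreasing_by
  simp only [List.length_dropLast]
  have : 0 < l.length := List.length_pos_iff.mpr h
  omega

lemma anchor_nil (E : Finset (List Bool)) : anchor E [] = [] := by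
  unfold anchor; simp

lemma anchor_of_mem {E : Finset (List Bool)} {l : List Bool} (h : l ∈ E) :
    anchor E l = l := by
  unfold anchor
  by_cases h0 : l = []
  · simp [h0]
  · simp [h0, h]

lemma anchor_of_not_mem {E : Finset (List Bool)} {l : List Bool} (h0 : l ≠ [])
    (h : l ∉ E) : anchor E l = anchor E l.dropLast := by
  conv_lhs => unfold anchor
  simp [h0, h]

lemma stepRel_symm {E : Finset (List Bool)} {p q : List Bool} (h : stepRel E p q) :
    stepRel E q p := by
  unfold stepRel at *; tauto

lemma anchor_eq_of_step {E : Finset (List Bool)} {p q : List Bool} (h : stepRel E p q) :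
    anchor E p = anchor E q := by
  rcases h with ⟨rfl, hp, hpe⟩ | ⟨rfl, hq, hqe⟩
  · exact anchor_of_not_mem hp hpe
  · exact (anchor_of_not_mem hq hqe).symm

lemma anchor_eq_of_rtg {E : Finset (List Bool)} {p q : List Bool}
    (h : Relation.ReflTransGen (stepRel E) p q) : anchor E p = anchor E q := by
  induction h with
  | refl => rfl
  | tail _ h2 ih => exact ih.trans (anchor_eq_of_step h2)

lemma rtg_symm {E : Finset (List Bool)} {p q : List Bool}
    (h : Relation.ReflTransGen (stepRel E) p q) :
    Relation.ReflTransGen (stepRel E) q p := by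
  induction h with
  | refl => exact Relation.ReflTransGen.refl
  | tail _ h2 ih => exact Relation.ReflTransGen.head (stepRel_symm h2) ih

lemma rtg_anchor (E : Finset (List Bool)) (p : List Bool) :
    Relation.ReflTransGen (stepRel E) p (anchor E p) := by
  induction p using List.reverseRecOn with
  | nil => rw [anchor_nil]
  | append_singleton xs x ih =>
    by_cases h : xs ++ [x] ∈ E
    · rw [anchor_of_mem h]
    · rw [anchor_of_not_mem (by simp) h, List.dropLast_concat]
      exact Relation.ReflTransGen.head (Or.inl ⟨by simp, by simp, h⟩) ih

lemma rtg_iff_anchor_eq {E : Finset (List Bool)} {p q : List Bool} :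
    Relation.ReflTransGen (stepRel E) p q ↔ anchor E p = anchor E q := by
  constructor
  · exact anchor_eq_of_rtg
  · intro h
    exact (rtg_anchor E p).trans (h ▸ rtg_symm (rtg_anchor E q))

lemma component_eq (t : RTree α) (E : Finset (List Bool)) (p : List Bool) :
    component t E p = (positions t).filter (fun q => anchor E q = anchor E p) := by
  ext q
  simp only [component, Finset.mem_filter, rtg_iff_anchor_eq]
  tauto

lemma component_congr {t : RTree α} {E : Finset (List Bool)} {p p' : List Bool}
    (h : anchor E p = anchor E p') : component t E p = component t E p' := by
  rw [component_eq, component_eq, h]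

lemma self_mem_component {t : RTree α} {E : Finset (List Bool)} {p : List Bool}
    (h : p ∈ positions t) : p ∈ component t E p := by
  rw [component_eq]; exact Finset.mem_filter.mpr ⟨h, rfl⟩

end RTree
namespace RTree

variable {α : Type}

lemma anchor_consA {E E₁ : Finset (List Bool)} {b : Bool}
    (hE : ∀ q : List Bool, b :: q ∈ E ↔ q = [] ∨ q ∈ E₁) (q : List Bool) :
    anchor E (b :: q) = b :: anchor E₁ q := by
  induction q using List.reverseRecOn with
  | nil =>
    rw [anchor_of_mem ((hE []).mpr (Or.inl rfl)), anchor_nil]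
  | append_singleton xs x ih =>
    by_cases h : xs ++ [x] ∈ E₁
    · rw [anchor_of_mem ((hE _).mpr (Or.inr h)), anchor_of_mem h]
    · have hne : b :: (xs ++ [x]) ∉ E := by
        rw [hE]; simp [h]
      rw [anchor_of_not_mem (by simp) hne, anchor_of_not_mem (by simp) h]
      have h2 : (b :: (xs ++ [x])).dropLast = b :: xs := by
        rw [← List.cons_append, List.dropLast_concat]
      rw [h2, List.dropLast_concat, ih]

lemma anchor_consB {E E₁ : Finset (List Bool)} {b : Bool}
    (hE : ∀ q : List Bool, b :: q ∈ E ↔ q ∈ E₁) (h0 : [] ∉ E₁) (q : List Bool) :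
    anchor E (b :: q) = if anchor E₁ q = [] then [] else b :: anchor E₁ q := by
  induction q using List.reverseRecOn with
  | nil =>
    have : b :: ([] : List Bool) ∉ E := by rw [hE]; exact h0
    rw [anchor_of_not_mem (by simp) this]
    simp [anchor_nil]
  | append_singleton xs x ih =>
    by_cases h : xs ++ [x] ∈ E₁
    · rw [anchor_of_mem ((hE _).mpr h), anchor_of_mem h]
      simp
    · have hne : b :: (xs ++ [x]) ∉ E := by rw [hE]; exact h
      rw [anchor_of_not_mem (by simp) hne, anchor_of_not_mem (by simp) h]
      have h2 : (b :: (xs ++ [x])).dropLast = b :: xs := by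
        rw [← List.cons_append, List.dropLast_concat]
      rw [h2, List.dropLast_concat, ih]

lemma nil_mem_positions (t : RTree α) : ([] : List Bool) ∈ positions t := by
  cases t <;> simp [positions]

lemma internalEdges_subset (t : RTree α) : internalEdges t ⊆ positions t :=
  Finset.filter_subset _ _

lemma ne_nil_of_mem_internalEdges {t : RTree α} {p : List Bool}
    (h : p ∈ internalEdges t) : p ≠ [] := by
  rw [internalEdges, Finset.mem_filter] at h
  exact h.2.1

lemma nil_notMem_internalEdges (t : RTree α) : ([] : List Bool) ∉ internalEdges t :=
  fun h => ne_nil_of_mem_internalEdges h rfl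

section OneChild

variable {v₁ : RTree α} {a : α} {b : Bool} {tv : RTree α}

/-- `tv` is a node whose `b`-child is `v₁` and whose other child is `leaf a`. -/
def OneChild (tv v₁ : RTree α) (a : α) (b : Bool) : Prop :=
  (b = false ∧ tv = node v₁ (leaf a)) ∨ (b = true ∧ tv = node (leaf a) v₁)

lemma positions_tv (h : OneChild tv v₁ a b) :
    positions tv = insert [] (insert [!b] ((positions v₁).image (List.cons b))) := by
  rcases h with ⟨rfl, rfl⟩ | ⟨rfl, rfl⟩ <;>
    · ext q
      simp only [positions, Finset.mem_insert, Finset.mem_union, Finset.mem_image,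
        Finset.mem_singleton, Bool.not_false, Bool.not_true]
      aesop

lemma subtreeAt_cons (h : OneChild tv v₁ a b) (p : List Bool) :
    subtreeAt tv (b :: p) = subtreeAt v₁ p := by
  rcases h with ⟨rfl, rfl⟩ | ⟨rfl, rfl⟩ <;> simp [subtreeAt]

lemma subtreeAt_other (h : OneChild tv v₁ a b) :
    subtreeAt tv [!b] = some (leaf a) := by
  rcases h with ⟨rfl, rfl⟩ | ⟨rfl, rfl⟩ <;> simp [subtreeAt]

lemma mem_internalEdges {t : RTree α} {p : List Bool} :
    p ∈ internalEdges t ↔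
      p ∈ positions t ∧ p ≠ [] ∧ ∃ t', subtreeAt t p = some t' ∧ t'.isNode := by
  simp [internalEdges]

lemma subtreeAt_nil (t : RTree α) : subtreeAt t [] = some t := by
  cases t <;> rfl

lemma internalEdges_tv (h : OneChild tv v₁ a b) (hv : v₁.isNode) :
    internalEdges tv = insert [b] ((internalEdges v₁).image (List.cons b)) := by
  ext q
  simp only [mem_internalEdges, positions_tv h, Finset.mem_insert, Finset.mem_image]
  constructor
  · rintro ⟨hq1 | hq1 | ⟨p, hp, rfl⟩, hq2, t', ht', hn⟩
    · exact absurd hq1 hq2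
    · subst hq1
      rw [subtreeAt_other h] at ht'
      cases ht'
      exact absurd hn (by simp [isNode])
    · rcases p with _ | ⟨c, p⟩
      · exact Or.inl rfl
      · refine Or.inr ⟨c :: p, ?_, rfl⟩
        rw [subtreeAt_cons h] at ht'
        exact ⟨hp, by simp, t', ht', hn⟩
  · rintro (rfl | ⟨p, hp, rfl⟩)
    · refine ⟨Or.inr (Or.inr ⟨[], nil_mem_positions v₁, rfl⟩), by simp, v₁, ?_, hv⟩
      rw [show [b] = b :: ([] : List Bool) from rfl, subtreeAt_cons h, subtreeAt_nil]
    · obtain ⟨hp1, hp2, t', ht', hn⟩ := hp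
      exact ⟨Or.inr (Or.inr ⟨p, hp1, rfl⟩), by simp, t',
        by rw [subtreeAt_cons h]; exact ht', hn⟩

end OneChild

end RTree
namespace RTree

variable {α : Type}

section CaseA

variable {v₁ tv : RTree α} {a : α} {b : Bool} {E₁ : Finset (List Bool)}

lemma consb_injective (b : Bool) : Function.Injective (List.cons b) := by
  intro x y h; injection h

lemma nil_notMem_sub (hE₁ : E₁ ⊆ internalEdges v₁) : ([] : List Bool) ∉ E₁ :=
  fun h => nil_notMem_internalEdges v₁ (hE₁ h)

lemma memEA (hE₁ : E₁ ⊆ internalEdges v₁) (q : List Bool) :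
    b :: q ∈ insert [b] (E₁.image (List.cons b)) ↔ q = [] ∨ q ∈ E₁ := by
  simp only [Finset.mem_insert, Finset.mem_image]
  constructor
  · rintro (h | ⟨p, hp, h2⟩)
    · injection h with _ h'; exact Or.inl h'
    · injection h2 with _ h'; exact Or.inr (h' ▸ hp)
  · rintro (rfl | h)
    · exact Or.inl rfl
    · exact Or.inr ⟨q, h, rfl⟩

lemma other_notMem_EA (hE₁ : E₁ ⊆ internalEdges v₁) :
    [!b] ∉ insert [b] (E₁.image (List.cons b)) := by
  rw [show ([!b] : List Bool) = (!b) :: [] from rfl]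
  simp only [Finset.mem_insert, Finset.mem_image]
  rintro (h | ⟨p, hp, h2⟩)
  · injection h with h' _; simp at h'
  · injection h2 with h' _; simp at h'

lemma anchorA (hE₁ : E₁ ⊆ internalEdges v₁) (q : List Bool) :
    anchor (insert [b] (E₁.image (List.cons b))) (b :: q) = b :: anchor E₁ q :=
  anchor_consA (memEA hE₁) q

lemma anchorA_other (hE₁ : E₁ ⊆ internalEdges v₁) :
    anchor (insert [b] (E₁.image (List.cons b))) [!b] = [] := by
  rw [anchor_of_not_mem (by simp) (other_notMem_EA hE₁)]
  simp [anchor_nil]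

lemma compA_root (h : OneChild tv v₁ a b) (hE₁ : E₁ ⊆ internalEdges v₁) :
    component tv (insert [b] (E₁.image (List.cons b))) [] = {[], [!b]} := by
  rw [component_eq, positions_tv h]
  ext q
  simp only [Finset.mem_filter, Finset.mem_insert, Finset.mem_image, Finset.mem_singleton,
    anchor_nil]
  constructor
  · rintro ⟨rfl | rfl | ⟨p, hp, rfl⟩, hq⟩
    · exact Or.inl rfl
    · exact Or.inr rfl
    · rw [anchorA hE₁] at hq; exact absurd hq (by simp)
  · rintro (rfl | rfl)
    · exact ⟨Or.inl rfl, anchor_nil _⟩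
    · exact ⟨Or.inr (Or.inl rfl), anchorA_other hE₁⟩

lemma compA_shift (h : OneChild tv v₁ a b) (hE₁ : E₁ ⊆ internalEdges v₁) (p : List Bool) :
    component tv (insert [b] (E₁.image (List.cons b))) (b :: p)
      = (component v₁ E₁ p).image (List.cons b) := by
  rw [component_eq, component_eq, positions_tv h, anchorA hE₁]
  ext q
  simp only [Finset.mem_filter, Finset.mem_insert, Finset.mem_image]
  constructor
  · rintro ⟨rfl | rfl | ⟨p', hp', rfl⟩, hq⟩
    · rw [anchor_nil] at hq; exact absurd hq (by simp)
    · rw [anchorA_other hE₁] at hq; exact absurd hq (by simp)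
    · rw [anchorA hE₁] at hq
      injection hq with _ h2
      exact ⟨p', ⟨hp', h2⟩, rfl⟩
  · rintro ⟨p', ⟨hp', h2⟩, rfl⟩
    exact ⟨Or.inr (Or.inr ⟨p', hp', rfl⟩), by rw [anchorA hE₁, h2]⟩

lemma compEdgeCountA (h : OneChild tv v₁ a b) (hv : v₁.isNode)
    (hE₁ : E₁ ⊆ internalEdges v₁) (C : Finset (List Bool)) :
    compEdgeCount tv (insert [b] (E₁.image (List.cons b))) (C.image (List.cons b))
      = compEdgeCount v₁ E₁ C := by
  unfold compEdgeCount
  rw [internalEdges_tv h hv]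
  have himg : (insert [b] ((internalEdges v₁).image (List.cons b))).filter
      (fun p => p ∉ insert [b] (E₁.image (List.cons b)) ∧ p ∈ C.image (List.cons b))
      = ((internalEdges v₁).filter (fun p => p ∉ E₁ ∧ p ∈ C)).image (List.cons b) := by
    ext q
    simp only [Finset.mem_filter, Finset.mem_insert, Finset.mem_image]
    constructor
    · rintro ⟨rfl | ⟨p, hp, rfl⟩, hq1, hq2⟩
      · exact absurd (Or.inl rfl) hq1
      · obtain ⟨c, hc, hcq⟩ := hq2
        have hcp : c = p := (consb_injective b) hcq
        subst hcp
        have hn : c ∉ E₁ := fun hmem => hq1 (Or.inr ⟨c, hmem, rfl⟩)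
        exact ⟨c, ⟨hp, hn, hc⟩, rfl⟩
    · rintro ⟨p, ⟨hp1, hp2, hp3⟩, rfl⟩
      refine ⟨Or.inr ⟨p, hp1, rfl⟩, ?_, ⟨p, hp3, rfl⟩⟩
      rintro (h' | ⟨a', ha', he⟩)
      · injection h' with _ h''
        exact nil_notMem_internalEdges v₁ (h'' ▸ hp1)
      · injection he with _ h''
        exact hp2 (h'' ▸ ha')
  rw [himg, Finset.card_image_of_injective _ (consb_injective b)]

lemma compEdgeCountA_root (h : OneChild tv v₁ a b) (hv : v₁.isNode)
    (hE₁ : E₁ ⊆ internalEdges v₁) :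
    compEdgeCount tv (insert [b] (E₁.image (List.cons b))) {[], [!b]} = 0 := by
  unfold compEdgeCount
  rw [Finset.card_eq_zero, Finset.filter_eq_empty_iff, internalEdges_tv h hv]
  intro q hq
  rcases Finset.mem_insert.mp hq with rfl | hq'
  · rintro ⟨hq1, _⟩; exact hq1 (Finset.mem_insert_self _ _)
  · obtain ⟨p, _, rfl⟩ := Finset.mem_image.mp hq'
    rintro ⟨_, hq2⟩
    rcases Finset.mem_insert.mp hq2 with h' | h'
    · exact (by simp : b :: p ≠ []) h'
    · rw [Finset.mem_singleton] at h'
      injection h' with h'' _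
      simp at h''

lemma kappaA (h : OneChild tv v₁ a b) (hv : v₁.isNode) (hE₁ : E₁ ⊆ internalEdges v₁) :
    kappa tv (insert [b] (E₁.image (List.cons b))) = 0 := by
  unfold kappa
  rw [compA_root h hE₁]
  exact compEdgeCountA_root h hv hE₁

lemma componentsA (h : OneChild tv v₁ a b) (hE₁ : E₁ ⊆ internalEdges v₁) :
    components tv (insert [b] (E₁.image (List.cons b)))
      = insert {[], [!b]} ((components v₁ E₁).image (Finset.image (List.cons b))) := by
  unfold components
  rw [positions_tv h, Finset.image_insert, Finset.image_insert, compA_root h hE₁]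
  have h1 : component tv (insert [b] (E₁.image (List.cons b))) [!b] = {[], [!b]} := by
    rw [component_congr (p' := []) (by rw [anchorA_other hE₁, anchor_nil]),
      compA_root h hE₁]
  rw [h1, Finset.insert_idem, Finset.image_image, Finset.image_image]
  congr 1
  apply Finset.image_congr
  intro p hp
  exact compA_shift h hE₁ p

lemma beta_zero : beta 0 = 1 := by
  simp [beta, numBPT]

lemma NEdgesA (h : OneChild tv v₁ a b) (hv : v₁.isNode) (hE₁ : E₁ ⊆ internalEdges v₁) :
    NEdges tv (insert [b] (E₁.image (List.cons b))) = NEdges v₁ E₁ := by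
  unfold NEdges
  rw [componentsA h hE₁]
  have hroot : ({[], [!b]} : Finset (List Bool))
      ∉ (components v₁ E₁).image (Finset.image (List.cons b)) := by
    intro hmem
    obtain ⟨D, _, hDe⟩ := Finset.mem_image.mp hmem
    have hnil : ([] : List Bool) ∈ D.image (List.cons b) := by rw [hDe]; simp
    obtain ⟨p, _, hp⟩ := Finset.mem_image.mp hnil
    exact (by simp : b :: p ≠ []) hp
  rw [Finset.prod_insert hroot, compEdgeCountA_root h hv hE₁, beta_zero, one_mul]
  rw [Finset.prod_image (fun x _ y _ hxy => Finset.image_injective (consb_injective b) hxy)]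
  exact Finset.prod_congr rfl fun C _ => by rw [compEdgeCountA h hv hE₁ C]

lemma cardEA (hE₁ : E₁ ⊆ internalEdges v₁) :
    (insert [b] (E₁.image (List.cons b))).card = E₁.card + 1 := by
  rw [Finset.card_insert_of_notMem, Finset.card_image_of_injective _ (consb_injective b)]
  intro hmem
  obtain ⟨p, hp, hpe⟩ := Finset.mem_image.mp hmem
  injection hpe with _ h'
  exact nil_notMem_sub hE₁ (h' ▸ hp)

end CaseA

end RTree
namespace RTree

variable {α : Type}

section CaseB

variable {v₁ tv : RTree α} {a : α} {b : Bool} {E₁ : Finset (List Bool)}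

lemma memEB (q : List Bool) : b :: q ∈ E₁.image (List.cons b) ↔ q ∈ E₁ := by
  simp only [Finset.mem_image]
  constructor
  · rintro ⟨p, hp, h2⟩
    injection h2 with _ h'; exact h' ▸ hp
  · intro h; exact ⟨q, h, rfl⟩

lemma root_notMem_EB (hE₁ : E₁ ⊆ internalEdges v₁) : [b] ∉ E₁.image (List.cons b) := by
  rw [show ([b] : List Bool) = b :: [] from rfl, memEB]
  exact nil_notMem_sub hE₁

lemma other_notMem_EB : [!b] ∉ E₁.image (List.cons b) := by
  simp only [Finset.mem_image]
  rintro ⟨p, hp, h2⟩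
  injection h2 with h' _
  simp at h'

lemma nil_notMem_EB : ([] : List Bool) ∉ E₁.image (List.cons b) := by
  simp only [Finset.mem_image]
  rintro ⟨p, hp, h2⟩
  exact (by simp : b :: p ≠ []) h2

lemma anchorB (hE₁ : E₁ ⊆ internalEdges v₁) (q : List Bool) :
    anchor (E₁.image (List.cons b)) (b :: q)
      = if anchor E₁ q = [] then [] else b :: anchor E₁ q :=
  anchor_consB memEB (nil_notMem_sub hE₁) q

lemma anchorB_nil_iff (hE₁ : E₁ ⊆ internalEdges v₁) (q : List Bool) :
    anchor (E₁.image (List.cons b)) (b :: q) = [] ↔ anchor E₁ q = [] := by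
  rw [anchorB hE₁]
  by_cases h : anchor E₁ q = [] <;> simp [h]

lemma anchorB_other : anchor (E₁.image (List.cons b)) [!b] = [] := by
  rw [anchor_of_not_mem (by simp) other_notMem_EB]
  simp [anchor_nil]

lemma mem_root_component {t : RTree α} {F : Finset (List Bool)} {q : List Bool} :
    q ∈ component t F [] ↔ q ∈ positions t ∧ anchor F q = [] := by
  rw [component_eq, Finset.mem_filter, anchor_nil]

lemma compB_root (h : OneChild tv v₁ a b) (hE₁ : E₁ ⊆ internalEdges v₁) :
    component tv (E₁.image (List.cons b)) []
      = insert [] (insert [!b] ((component v₁ E₁ []).image (List.cons b))) := by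
  ext q
  rw [mem_root_component]
  simp only [positions_tv h, Finset.mem_insert, Finset.mem_image]
  constructor
  · rintro ⟨rfl | rfl | ⟨p, hp, rfl⟩, hq⟩
    · exact Or.inl rfl
    · exact Or.inr (Or.inl rfl)
    · rw [anchorB_nil_iff hE₁] at hq
      exact Or.inr (Or.inr ⟨p, mem_root_component.mpr ⟨hp, hq⟩, rfl⟩)
  · rintro (rfl | rfl | ⟨p, hp, rfl⟩)
    · exact ⟨Or.inl rfl, anchor_nil _⟩
    · exact ⟨Or.inr (Or.inl rfl), anchorB_other⟩
    · obtain ⟨hp1, hp2⟩ := mem_root_component.mp hp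
      exact ⟨Or.inr (Or.inr ⟨p, hp1, rfl⟩), (anchorB_nil_iff hE₁ p).mpr hp2⟩

lemma compB_shift (h : OneChild tv v₁ a b) (hE₁ : E₁ ⊆ internalEdges v₁) {p : List Bool}
    (hp : anchor E₁ p ≠ []) :
    component tv (E₁.image (List.cons b)) (b :: p)
      = (component v₁ E₁ p).image (List.cons b) := by
  rw [component_eq, component_eq, positions_tv h, anchorB hE₁, if_neg hp]
  ext q
  simp only [Finset.mem_filter, Finset.mem_insert, Finset.mem_image]
  constructor
  · rintro ⟨rfl | rfl | ⟨p', hp', rfl⟩, hq⟩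
    · rw [anchor_nil] at hq; exact absurd hq (by simp)
    · rw [anchorB_other] at hq; exact absurd hq (by simp)
    · rw [anchorB hE₁] at hq
      by_cases h' : anchor E₁ p' = []
      · rw [if_pos h'] at hq; exact absurd hq (by simp)
      · rw [if_neg h'] at hq
        injection hq with _ h2
        exact ⟨p', ⟨hp', h2⟩, rfl⟩
  · rintro ⟨p', ⟨hp', h2⟩, rfl⟩
    refine ⟨Or.inr (Or.inr ⟨p', hp', rfl⟩), ?_⟩
    rw [anchorB hE₁, h2, if_neg hp]

lemma compEdgeCountB (h : OneChild tv v₁ a b) (hv : v₁.isNode)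
    (hE₁ : E₁ ⊆ internalEdges v₁) {C : Finset (List Bool)} (hC : ([] : List Bool) ∉ C) :
    compEdgeCount tv (E₁.image (List.cons b)) (C.image (List.cons b))
      = compEdgeCount v₁ E₁ C := by
  unfold compEdgeCount
  rw [internalEdges_tv h hv]
  have himg : (insert [b] ((internalEdges v₁).image (List.cons b))).filter
      (fun p => p ∉ E₁.image (List.cons b) ∧ p ∈ C.image (List.cons b))
      = ((internalEdges v₁).filter (fun p => p ∉ E₁ ∧ p ∈ C)).image (List.cons b) := by
    ext q
    simp only [Finset.mem_filter, Finset.mem_insert, Finset.mem_image]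
    constructor
    · rintro ⟨rfl | ⟨p, hp, rfl⟩, hq1, hq2⟩
      · obtain ⟨c, hc, hcq⟩ := hq2
        injection hcq with _ h'
        exact absurd (h' ▸ hc) hC
      · obtain ⟨c, hc, hcq⟩ := hq2
        have hcp : c = p := (consb_injective b) hcq
        subst hcp
        have hn : c ∉ E₁ := fun hmem => hq1 ⟨c, hmem, rfl⟩
        exact ⟨c, ⟨hp, hn, hc⟩, rfl⟩
    · rintro ⟨p, ⟨hp1, hp2, hp3⟩, rfl⟩
      refine ⟨Or.inr ⟨p, hp1, rfl⟩, ?_, ⟨p, hp3, rfl⟩⟩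
      rintro ⟨a', ha', he⟩
      injection he with _ h''
      exact hp2 (h'' ▸ ha')
  rw [himg, Finset.card_image_of_injective _ (consb_injective b)]

lemma kappaB (h : OneChild tv v₁ a b) (hv : v₁.isNode) (hE₁ : E₁ ⊆ internalEdges v₁) :
    kappa tv (E₁.image (List.cons b)) = kappa v₁ E₁ + 1 := by
  unfold kappa compEdgeCount
  rw [internalEdges_tv h hv]
  have himg : (insert [b] ((internalEdges v₁).image (List.cons b))).filter
      (fun p => p ∉ E₁.image (List.cons b)
        ∧ p ∈ component tv (E₁.image (List.cons b)) [])
      = insert [b] (((internalEdges v₁).filter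
          (fun p => p ∉ E₁ ∧ p ∈ component v₁ E₁ [])).image (List.cons b)) := by
    ext q
    simp only [Finset.mem_filter, Finset.mem_insert, Finset.mem_image]
    constructor
    · rintro ⟨rfl | ⟨p, hp, rfl⟩, hq1, hq2⟩
      · exact Or.inl rfl
      · rw [mem_root_component, anchorB_nil_iff hE₁] at hq2
        refine Or.inr ⟨p, ⟨hp, fun hmem => hq1 ⟨p, hmem, rfl⟩, ?_⟩, rfl⟩
        exact mem_root_component.mpr ⟨(internalEdges_subset v₁) hp, hq2.2⟩
    · rintro (rfl | ⟨p, ⟨hp1, hp2, hp3⟩, rfl⟩)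
      · refine ⟨Or.inl rfl, ?_, ?_⟩
        · rintro ⟨a', ha', he⟩
          injection he with _ h''
          exact nil_notMem_sub hE₁ (h'' ▸ ha')
        rw [show ([b] : List Bool) = b :: [] from rfl, mem_root_component,
          anchorB_nil_iff hE₁]
        exact ⟨by rw [positions_tv h]; simp [nil_mem_positions], anchor_nil _⟩
      · refine ⟨Or.inr ⟨p, hp1, rfl⟩, ?_, ?_⟩
        · rintro ⟨a', ha', he⟩
          injection he with _ h''
          exact hp2 (h'' ▸ ha')
        rw [mem_root_component, anchorB_nil_iff hE₁]
        refine ⟨?_, (mem_root_component.mp hp3).2⟩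
        rw [positions_tv h]
        exact Finset.mem_insert_of_mem (Finset.mem_insert_of_mem
          (Finset.mem_image_of_mem _ ((internalEdges_subset v₁) hp1)))
  have hnotmem : ([b] : List Bool) ∉ ((internalEdges v₁).filter
      (fun p => p ∉ E₁ ∧ p ∈ component v₁ E₁ [])).image (List.cons b) := by
    intro hmem
    obtain ⟨p, hp, hpe⟩ := Finset.mem_image.mp hmem
    injection hpe with _ h'
    exact nil_notMem_internalEdges v₁ (h' ▸ (Finset.mem_filter.mp hp).1)
  rw [himg, Finset.card_insert_of_notMem hnotmem,
    Finset.card_image_of_injective _ (consb_injective b)]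

lemma component_eq_root_iff {q : List Bool} (hq : q ∈ positions v₁) :
    component v₁ E₁ q = component v₁ E₁ [] ↔ anchor E₁ q = [] := by
  constructor
  · intro h
    have : q ∈ component v₁ E₁ [] := h ▸ self_mem_component hq
    exact (mem_root_component.mp this).2
  · intro h
    exact component_congr (by rw [h, anchor_nil])

lemma componentsB (h : OneChild tv v₁ a b) (hE₁ : E₁ ⊆ internalEdges v₁) :
    components tv (E₁.image (List.cons b))
      = insert (component tv (E₁.image (List.cons b)) [])
        (((components v₁ E₁).erase (component v₁ E₁ [])).image
          (Finset.image (List.cons b))) := by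
  ext C
  simp only [components, Finset.mem_insert, Finset.mem_image, Finset.mem_erase]
  constructor
  · rintro ⟨q, hq, rfl⟩
    rw [positions_tv h] at hq
    simp only [Finset.mem_insert, Finset.mem_image] at hq
    rcases hq with rfl | rfl | ⟨p, hp, rfl⟩
    · exact Or.inl rfl
    · exact Or.inl (component_congr (by rw [anchorB_other, anchor_nil]))
    · by_cases hp' : anchor E₁ p = []
      · exact Or.inl (component_congr (by rw [(anchorB_nil_iff hE₁ p).mpr hp', anchor_nil]))
      · refine Or.inr ⟨component v₁ E₁ p, ⟨?_, ⟨p, hp, rfl⟩⟩, (compB_shift h hE₁ hp').symm⟩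
        intro heq
        exact hp' ((component_eq_root_iff hp).mp heq)
  · rintro (rfl | ⟨D, ⟨hD1, q, hq, rfl⟩, rfl⟩)
    · exact ⟨[], by rw [positions_tv h]; simp, rfl⟩
    · have hq' : anchor E₁ q ≠ [] := fun h' => hD1 ((component_eq_root_iff hq).mpr h')
      refine ⟨b :: q, ?_, (compB_shift h hE₁ hq')⟩
      rw [positions_tv h]
      exact Finset.mem_insert_of_mem (Finset.mem_insert_of_mem (Finset.mem_image_of_mem _ hq))

lemma beta_succ (m : ℕ) : beta (m + 1) = beta m * (2 * m + 3) := by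
  unfold beta numBPT
  rw [show m + 1 + 3 = (m + 3) + 1 by ring, Finset.prod_Icc_succ_top (by omega)]
  congr 1

lemma NEdgesB (h : OneChild tv v₁ a b) (hv : v₁.isNode) (hE₁ : E₁ ⊆ internalEdges v₁) :
    NEdges tv (E₁.image (List.cons b)) = NEdges v₁ E₁ * (2 * kappa v₁ E₁ + 3) := by
  unfold NEdges
  rw [componentsB h hE₁]
  have hroot : component tv (E₁.image (List.cons b)) []
      ∉ ((components v₁ E₁).erase (component v₁ E₁ [])).image (Finset.image (List.cons b)) := by
    intro hmem
    obtain ⟨D, _, hDe⟩ := Finset.mem_image.mp hmem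
    have hnil : ([] : List Bool) ∈ D.image (List.cons b) := by
      rw [hDe]
      exact self_mem_component (nil_mem_positions tv)
    obtain ⟨p, _, hp⟩ := Finset.mem_image.mp hnil
    exact (by simp : b :: p ≠ []) hp
  rw [Finset.prod_insert hroot]
  have h1 : compEdgeCount tv (E₁.image (List.cons b))
      (component tv (E₁.image (List.cons b)) []) = kappa v₁ E₁ + 1 := kappaB h hv hE₁
  rw [h1]
  rw [Finset.prod_image (fun x _ y _ hxy => Finset.image_injective (consb_injective b) hxy)]
  have h2 : ∀ D ∈ (components v₁ E₁).erase (component v₁ E₁ []),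
      beta (compEdgeCount tv (E₁.image (List.cons b)) (D.image (List.cons b)))
        = beta (compEdgeCount v₁ E₁ D) := by
    intro D hD
    obtain ⟨hD1, hD2⟩ := Finset.mem_erase.mp hD
    obtain ⟨q, hq, rfl⟩ := Finset.mem_image.mp hD2
    have hnil : ([] : List Bool) ∉ component v₁ E₁ q := by
      intro hmem
      have : anchor E₁ [] = anchor E₁ q := by
        have := (Finset.mem_filter.mp (by rwa [component_eq] at hmem)).2
        rwa [anchor_nil] at this ⊢
      exact hD1 (component_congr this.symm)
    rw [compEdgeCountB h hv hE₁ hnil]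
  rw [Finset.prod_congr rfl h2]
  have h3 : (∏ C ∈ components v₁ E₁, beta (compEdgeCount v₁ E₁ C))
      = beta (kappa v₁ E₁) * ∏ D ∈ (components v₁ E₁).erase
        (component v₁ E₁ []), beta (compEdgeCount v₁ E₁ D) :=
    (Finset.mul_prod_erase (components v₁ E₁) (fun C => beta (compEdgeCount v₁ E₁ C))
      (Finset.mem_image_of_mem _ (nil_mem_positions v₁))).symm
  rw [h3, beta_succ]
  ring

lemma cardEB : (E₁.image (List.cons b)).card = E₁.card :=
  Finset.card_image_of_injective _ (consb_injective b)

end CaseB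

end RTree
namespace RTree

variable {α : Type}

section Sums

variable {v₁ tv : RTree α} {a : α} {b : Bool}

lemma sub_image_decomp {S T : Finset (List Bool)} (hS : S ⊆ T.image (List.cons b)) :
    (S.image List.tail) ⊆ T ∧ (S.image List.tail).image (List.cons b) = S
      ∧ (S.image List.tail).card = S.card := by
  have hform : ∀ q ∈ S, ∃ p ∈ T, q = b :: p := by
    intro q hq
    obtain ⟨p, hp, rfl⟩ := Finset.mem_image.mp (hS hq)
    exact ⟨p, hp, rfl⟩
  refine ⟨?_, ?_, ?_⟩
  · intro x hx
    obtain ⟨r, hr, rfl⟩ := Finset.mem_image.mp hx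
    obtain ⟨p, hpT, rfl⟩ := hform r hr
    exact hpT
  · ext q
    simp only [Finset.mem_image]
    constructor
    · rintro ⟨x, ⟨r, hr, rfl⟩, rfl⟩
      obtain ⟨p, hpT, rfl⟩ := hform r hr
      exact hr
    · intro hq
      refine ⟨List.tail q, ⟨q, hq, rfl⟩, ?_⟩
      obtain ⟨p, _, rfl⟩ := hform q hq
      rfl
  · apply Finset.card_image_of_injOn
    intro x hx y hy hxy
    obtain ⟨p, _, rfl⟩ := hform x hx
    obtain ⟨p', _, rfl⟩ := hform y hy
    simp only [List.tail_cons] at hxy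
    rw [hxy]

lemma edge_subset_cases {E : Finset (List Bool)} (h : OneChild tv v₁ a b)
    (hv : v₁.isNode) (hE : E ⊆ internalEdges tv) (hb : [b] ∉ E) :
    E ⊆ (internalEdges v₁).image (List.cons b) := by
  intro x hx
  have := hE hx
  rw [internalEdges_tv h hv] at this
  rcases Finset.mem_insert.mp this with rfl | h'
  · exact absurd hx hb
  · exact h'

theorem master (h : OneChild tv v₁ a b) (hv : v₁.isNode) (s : ℕ) (hs : 1 ≤ s) :
    (R tv s 0 = ∑ k₁ ∈ Finset.range ((internalEdges v₁).card + 1), R v₁ (s - 1) k₁) ∧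
      ∀ k : ℕ, 1 ≤ k → R tv s k = R v₁ s (k - 1) * (2 * k + 1) := by
  constructor
  · -- k = 0 case
    have step1 : R tv s 0 = ∑ E₁ ∈ (internalEdges v₁).powerset.filter
        (fun F => F.card = s - 1), NEdges v₁ E₁ := by
      unfold R
      refine Finset.sum_nbij' (fun E => (E.erase [b]).image List.tail)
        (fun F => insert [b] (F.image (List.cons b))) ?_ ?_ ?_ ?_ ?_
      · intro E hE
        rw [Finset.mem_filter, Finset.mem_powerset] at hE
        obtain ⟨hsub, hcard, hkap⟩ := hE
        have hbE : [b] ∈ E := by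
          by_contra hb
          have hEsub := edge_subset_cases h hv hsub hb
          obtain ⟨h1, h2, h3⟩ := sub_image_decomp hEsub
          rw [← h2, kappaB h hv h1] at hkap
          omega
        have hesub : E.erase [b] ⊆ (internalEdges v₁).image (List.cons b) :=
          edge_subset_cases h hv ((Finset.erase_subset _ _).trans hsub)
            (Finset.notMem_erase _ _)
        obtain ⟨h1, h2, h3⟩ := sub_image_decomp hesub
        rw [Finset.mem_filter, Finset.mem_powerset]
        refine ⟨h1, ?_⟩
        rw [h3, Finset.card_erase_of_mem hbE, hcard]
      · intro F hF
        rw [Finset.mem_filter, Finset.mem_powerset] at hF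
        obtain ⟨hsub, hcard⟩ := hF
        rw [Finset.mem_filter, Finset.mem_powerset]
        refine ⟨?_, ?_, kappaA h hv hsub⟩
        · rw [internalEdges_tv h hv]
          exact Finset.insert_subset_insert _ (Finset.image_subset_image hsub)
        · rw [cardEA hsub, hcard]
          omega
      · intro E hE
        rw [Finset.mem_filter, Finset.mem_powerset] at hE
        obtain ⟨hsub, hcard, hkap⟩ := hE
        have hbE : [b] ∈ E := by
          by_contra hb
          have hEsub := edge_subset_cases h hv hsub hb
          obtain ⟨h1, h2, h3⟩ := sub_image_decomp hEsub
          rw [← h2, kappaB h hv h1] at hkap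
          omega
        have hesub : E.erase [b] ⊆ (internalEdges v₁).image (List.cons b) :=
          edge_subset_cases h hv ((Finset.erase_subset _ _).trans hsub)
            (Finset.notMem_erase _ _)
        obtain ⟨h1, h2, h3⟩ := sub_image_decomp hesub
        show insert [b] (((E.erase [b]).image List.tail).image (List.cons b)) = E
        rw [h2, Finset.insert_erase hbE]
      · intro F hF
        rw [Finset.mem_filter, Finset.mem_powerset] at hF
        show ((insert [b] (F.image (List.cons b))).erase [b]).image List.tail = F
        rw [Finset.erase_insert (root_notMem_EB hF.1), Finset.image_image]
        have : (List.tail ∘ List.cons b) = id := by funext p; rfl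
        rw [this, Finset.image_id]
      · intro E hE
        rw [Finset.mem_filter, Finset.mem_powerset] at hE
        obtain ⟨hsub, hcard, hkap⟩ := hE
        have hbE : [b] ∈ E := by
          by_contra hb
          have hEsub := edge_subset_cases h hv hsub hb
          obtain ⟨h1, h2, h3⟩ := sub_image_decomp hEsub
          rw [← h2, kappaB h hv h1] at hkap
          omega
        have hesub : E.erase [b] ⊆ (internalEdges v₁).image (List.cons b) :=
          edge_subset_cases h hv ((Finset.erase_subset _ _).trans hsub)
            (Finset.notMem_erase _ _)
        obtain ⟨h1, h2, h3⟩ := sub_image_decomp hesub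
        show NEdges tv E = NEdges v₁ ((E.erase [b]).image List.tail)
        conv_lhs => rw [← Finset.insert_erase hbE, ← h2]
        exact NEdgesA h hv h1
    rw [step1]
    rw [← Finset.sum_fiberwise_of_maps_to (g := kappa v₁)
      (t := Finset.range ((internalEdges v₁).card + 1)) ?_ (NEdges v₁)]
    · apply Finset.sum_congr rfl
      intro k₁ _
      unfold R
      rw [Finset.filter_filter]
    · intro F hF
      rw [Finset.mem_filter, Finset.mem_powerset] at hF
      rw [Finset.mem_range]
      have : kappa v₁ F ≤ (internalEdges v₁).card := Finset.card_filter_le _ _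
      omega
  · -- k ≥ 1 case
    intro k hk
    have step1 : R tv s k = ∑ E₁ ∈ (internalEdges v₁).powerset.filter
        (fun F => F.card = s ∧ kappa v₁ F = k - 1), NEdges v₁ E₁ * (2 * k + 1) := by
      unfold R
      refine Finset.sum_nbij' (fun E => E.image List.tail)
        (fun F => F.image (List.cons b)) ?_ ?_ ?_ ?_ ?_
      · intro E hE
        rw [Finset.mem_filter, Finset.mem_powerset] at hE
        obtain ⟨hsub, hcard, hkap⟩ := hE
        have hb : [b] ∉ E := by
          intro hbE
          have hesub : E.erase [b] ⊆ (internalEdges v₁).image (List.cons b) :=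
            edge_subset_cases h hv ((Finset.erase_subset _ _).trans hsub)
              (Finset.notMem_erase _ _)
          obtain ⟨h1, h2, h3⟩ := sub_image_decomp hesub
          have hEeq : E = insert [b] (((E.erase [b]).image List.tail).image (List.cons b)) := by
            rw [h2, Finset.insert_erase hbE]
          rw [hEeq, kappaA h hv h1] at hkap
          omega
        have hEsub := edge_subset_cases h hv hsub hb
        obtain ⟨h1, h2, h3⟩ := sub_image_decomp hEsub
        rw [Finset.mem_filter, Finset.mem_powerset]
        refine ⟨h1, by rw [h3, hcard], ?_⟩
        show kappa v₁ (E.image List.tail) = k - 1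
        have : kappa tv E = kappa v₁ (E.image List.tail) + 1 := by
          conv_lhs => rw [← h2]
          exact kappaB h hv h1
        omega
      · intro F hF
        rw [Finset.mem_filter, Finset.mem_powerset] at hF
        obtain ⟨hsub, hcard, hkap⟩ := hF
        rw [Finset.mem_filter, Finset.mem_powerset]
        refine ⟨?_, ?_, ?_⟩
        · rw [internalEdges_tv h hv]
          exact (Finset.image_subset_image hsub).trans (Finset.subset_insert _ _)
        · rw [cardEB, hcard]
        · rw [kappaB h hv hsub, hkap]
          omega
      · intro E hE
        rw [Finset.mem_filter, Finset.mem_powerset] at hE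
        obtain ⟨hsub, hcard, hkap⟩ := hE
        have hb : [b] ∉ E := by
          intro hbE
          have hesub : E.erase [b] ⊆ (internalEdges v₁).image (List.cons b) :=
            edge_subset_cases h hv ((Finset.erase_subset _ _).trans hsub)
              (Finset.notMem_erase _ _)
          obtain ⟨h1, h2, h3⟩ := sub_image_decomp hesub
          have hEeq : E = insert [b] (((E.erase [b]).image List.tail).image (List.cons b)) := by
            rw [h2, Finset.insert_erase hbE]
          rw [hEeq, kappaA h hv h1] at hkap
          omega
        exact (sub_image_decomp (edge_subset_cases h hv hsub hb)).2.1
      · intro F hF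
        show (F.image (List.cons b)).image List.tail = F
        rw [Finset.image_image]
        have : (List.tail ∘ List.cons b) = id := by funext p; rfl
        rw [this, Finset.image_id]
      · intro E hE
        rw [Finset.mem_filter, Finset.mem_powerset] at hE
        obtain ⟨hsub, hcard, hkap⟩ := hE
        have hb : [b] ∉ E := by
          intro hbE
          have hesub : E.erase [b] ⊆ (internalEdges v₁).image (List.cons b) :=
            edge_subset_cases h hv ((Finset.erase_subset _ _).trans hsub)
              (Finset.notMem_erase _ _)
          obtain ⟨h1, h2, h3⟩ := sub_image_decomp hesub
          have hEeq : E = insert [b] (((E.erase [b]).image List.tail).image (List.cons b)) := by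
            rw [h2, Finset.insert_erase hbE]
          rw [hEeq, kappaA h hv h1] at hkap
          omega
        have hEsub := edge_subset_cases h hv hsub hb
        obtain ⟨h1, h2, h3⟩ := sub_image_decomp hEsub
        have hkap' : kappa v₁ (E.image List.tail) = k - 1 := by
          have : kappa tv E = kappa v₁ (E.image List.tail) + 1 := by
            conv_lhs => rw [← h2]
            exact kappaB h hv h1
          omega
        have hN : NEdges tv E = NEdges v₁ (E.image List.tail)
            * (2 * kappa v₁ (E.image List.tail) + 3) := by
          conv_lhs => rw [← h2]
          exact NEdgesB h hv h1
        show NEdges tv E = NEdges v₁ (E.image List.tail) * (2 * k + 1)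
        rw [hN, hkap']
        congr 1
        omega
    rw [step1, ← Finset.sum_mul]
    rfl

end Sums

end RTree

/-- Let `T ∈ BPT(n)`, rooted as described, and let `v` be an internal
vertex with exactly one internal child `v₁`.  Then for every `s ≥ 1`:
`R(v,s,0) = ∑_{k₁ ≥ 0} R(v₁, s-1, k₁)` and, for every `k ≥ 1`,
`R(v,s,k) = R(v₁, s, k-1) · (2k+1)`.  (The sum over `k₁ ≥ 0` is finite, since
`R(v₁,s-1,k₁) = 0` for `k₁ > n_{v₁} = |E̊(T_{v₁})|`.) -/
theorem R_rec_one_internal_child (n : ℕ) (hn : 3 ≤ n) (t : RTree (Fin (n - 1)))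
    (hnodup : t.labels.Nodup) (hcard : Multiset.card t.labels = n - 1)
    (p : List Bool) (tv c₁ c₂ v₁ : RTree (Fin (n - 1)))
    (hp : t.subtreeAt p = some tv) (htv : tv = RTree.node c₁ c₂)
    (hone : (c₁.isNode ∧ ¬ c₂.isNode ∧ v₁ = c₁) ∨ (¬ c₁.isNode ∧ c₂.isNode ∧ v₁ = c₂))
    (s : ℕ) (hs : 1 ≤ s) :
    R tv s 0 = ∑ k₁ ∈ Finset.range ((internalEdges v₁).card + 1), R v₁ (s - 1) k₁ ∧
      ∀ k : ℕ, 1 ≤ k → R tv s k = R v₁ s (k - 1) * (2 * k + 1) := by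
  rcases hone with ⟨h1, h2, rfl⟩ | ⟨h1, h2, rfl⟩
  · cases c₂ with
    | node l r => exact absurd trivial h2
    | leaf a => exact master (Or.inl ⟨rfl, htv⟩) h1 s hs
  · cases c₁ with
    | node l r => exact absurd trivial h1
    | leaf a => exact master (Or.inr ⟨rfl, htv⟩) h2 s hs
end

section
/- Let T ∈ BPT(n), rooted as described, and let v be an internal vertex with two internal children v₁ and v₂. Then for every s ≥ 1: R(v,s,0) = ∑_{s₁=0}^{s−2} (∑_{k₁ ≥ 0} R(v₁,s₁,k₁)) · (∑_{k₂ ≥ 0} R(v₂, s−2−s₁, k₂)), where an empty sum equals zero. -/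
open scoped Classical

namespace StatementFiveAux

open RTree Finset

variable {α : Type}

lemma dropLast_cons' (b : Bool) {p : List Bool} (hp : p ≠ []) :
    (b :: p).dropLast = b :: p.dropLast := by
  cases p with
  | nil => exact absurd rfl hp
  | cons c q => rfl

lemma eq_single_of_dropLast_nil {x : List Bool} (h : x.dropLast = []) (hx : x ≠ []) :
    x = [false] ∨ x = [true] := by
  match x with
  | [] => exact absurd rfl hx
  | [b] => cases b <;> simp
  | b :: c :: xs => simp [List.dropLast] at h

lemma nil_mem_positions (t : RTree α) : [] ∈ positions t := by
  cases t <;> simp [positions]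

lemma cons_mem_positions {l r : RTree α} {b : Bool} {p : List Bool} :
    (b :: p) ∈ positions (node l r) ↔ p ∈ positions (if b then r else l) := by
  cases b <;> simp [positions]

lemma mem_internalEdges {t : RTree α} {p : List Bool} :
    p ∈ internalEdges t ↔
      p ∈ positions t ∧ p ≠ [] ∧ ∃ t', subtreeAt t p = some t' ∧ t'.isNode := by
  simp [internalEdges]

lemma nil_not_mem_internalEdges (t : RTree α) : [] ∉ internalEdges t := by
  simp [mem_internalEdges]

lemma cons_mem_internalEdges_node {l r : RTree α} {b : Bool} {q : List Bool} :
    (b :: q) ∈ internalEdges (node l r) ↔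
      (q = [] ∧ (if b then r else l).isNode) ∨ q ∈ internalEdges (if b then r else l) := by
  have hsub : subtreeAt (node l r) (b :: q) = subtreeAt (if b then r else l) q := rfl
  rw [mem_internalEdges, mem_internalEdges, cons_mem_positions, hsub]
  cases q with
  | nil =>
    simp [subtreeAt, nil_mem_positions]
  | cons c q' =>
    simp

/-- Glue two edge sets of the children into an edge set of the parent, adding the two
edges to the children. -/
def glue (E₁ E₂ : Finset (List Bool)) : Finset (List Bool) :=
  insert [false] (insert [true] (E₁.image (List.cons false) ∪ E₂.image (List.cons true)))

lemma single_mem_glue (b : Bool) (E₁ E₂ : Finset (List Bool)) : [b] ∈ glue E₁ E₂ := by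
  cases b <;> simp [glue]

lemma cons_mem_glue {E₁ E₂ : Finset (List Bool)} {b : Bool} {q : List Bool} (hq : q ≠ []) :
    b :: q ∈ glue E₁ E₂ ↔ q ∈ (if b then E₂ else E₁) := by
  cases b <;> simp [glue, hq]

section Step

variable {E' F : Finset (List Bool)} {b : Bool}

lemma step_cons_iff (hb : [b] ∈ E') (hcons : ∀ q : List Bool, q ≠ [] → (b :: q ∈ E' ↔ q ∈ F))
    {p x : List Bool} :
    stepRel E' (b :: p) x ↔ ∃ q, x = b :: q ∧ stepRel F p q := by
  constructor
  · rintro (⟨hx, -, hmem⟩ | ⟨hx, hne, hmem⟩)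
    · have hp : p ≠ [] := by
        rintro rfl; exact hmem hb
      refine ⟨p.dropLast, by rw [hx, dropLast_cons' b hp], Or.inl ⟨rfl, hp, fun h => hmem ((hcons p hp).2 h)⟩⟩
    · match x, hne with
      | c :: x', _ =>
        have hx' : x' ≠ [] := by
          rintro rfl; simp at hx
        rw [dropLast_cons' c hx'] at hx
        obtain ⟨rfl, hdl⟩ : c = b ∧ x'.dropLast = p := by
          injection hx with h1 h2; exact ⟨h1.symm, h2.symm⟩
        exact ⟨x', rfl, Or.inr ⟨hdl.symm, hx', fun h => hmem ((hcons x' hx').2 h)⟩⟩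
  · rintro ⟨q, rfl, (⟨hq, hne, hmem⟩ | ⟨hq, hne, hmem⟩)⟩
    · exact Or.inl ⟨by rw [dropLast_cons' b hne, hq], by simp, fun h => hmem ((hcons p hne).1 h)⟩
    · exact Or.inr ⟨by rw [dropLast_cons' b hne, hq], by simp, fun h => hmem ((hcons q hne).1 h)⟩

lemma rtg_cons_iff (hb : [b] ∈ E') (hcons : ∀ q : List Bool, q ≠ [] → (b :: q ∈ E' ↔ q ∈ F))
    {p x : List Bool} :
    Relation.ReflTransGen (stepRel E') (b :: p) x ↔
      ∃ q, x = b :: q ∧ Relation.ReflTransGen (stepRel F) p q := by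
  constructor
  · intro h
    induction h with
    | refl => exact ⟨p, rfl, Relation.ReflTransGen.refl⟩
    | tail h₁ h₂ ih =>
      obtain ⟨q, rfl, hq⟩ := ih
      obtain ⟨q', rfl, hs⟩ := (step_cons_iff hb hcons).1 h₂
      exact ⟨q', rfl, hq.tail hs⟩
  · rintro ⟨q, rfl, h⟩
    induction h with
    | refl => exact Relation.ReflTransGen.refl
    | tail h₁ h₂ ih => exact ih.tail ((step_cons_iff hb hcons).2 ⟨_, rfl, h₂⟩)

lemma not_step_nil (h0 : [false] ∈ E') (h1 : [true] ∈ E') (x : List Bool) :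
    ¬ stepRel E' [] x := by
  rintro (⟨-, h, -⟩ | ⟨hdl, hne, hmem⟩)
  · exact h rfl
  · rcases eq_single_of_dropLast_nil hdl.symm hne with rfl | rfl
    · exact hmem h0
    · exact hmem h1

lemma rtg_nil (h0 : [false] ∈ E') (h1 : [true] ∈ E') {x : List Bool}
    (h : Relation.ReflTransGen (stepRel E') [] x) : x = [] := by
  induction h with
  | refl => rfl
  | tail h₁ h₂ ih => subst ih; exact absurd h₂ (not_step_nil h0 h1 _)

end Step

lemma self_mem_component {t : RTree α} {E : Finset (List Bool)} {p : List Bool}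
    (hp : p ∈ positions t) : p ∈ component t E p :=
  Finset.mem_filter.2 ⟨hp, Relation.ReflTransGen.refl⟩

lemma component_nil {t : RTree α} {E : Finset (List Bool)}
    (h0 : [false] ∈ E) (h1 : [true] ∈ E) : component t E [] = {[]} := by
  ext q
  simp only [component, Finset.mem_filter, Finset.mem_singleton]
  constructor
  · rintro ⟨-, h⟩; exact rtg_nil h0 h1 h
  · rintro rfl; exact ⟨nil_mem_positions t, Relation.ReflTransGen.refl⟩

lemma component_cons {l r : RTree α} {E' F : Finset (List Bool)} {b : Bool}
    (hb : [b] ∈ E') (hcons : ∀ q : List Bool, q ≠ [] → (b :: q ∈ E' ↔ q ∈ F))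
    (p : List Bool) :
    component (node l r) E' (b :: p) =
      Finset.image (List.cons b) (component (if b then r else l) F p) := by
  ext x
  simp only [component, Finset.mem_filter, Finset.mem_image]
  constructor
  · rintro ⟨hpos, hr⟩
    obtain ⟨q, rfl, hq⟩ := (rtg_cons_iff hb hcons).1 hr
    exact ⟨q, ⟨cons_mem_positions.1 hpos, hq⟩, rfl⟩
  · rintro ⟨q, ⟨hqpos, hq⟩, rfl⟩
    exact ⟨cons_mem_positions.2 hqpos, (rtg_cons_iff hb hcons).2 ⟨q, rfl, hq⟩⟩

section Glue

variable {l r : RTree α} {E₁ E₂ : Finset (List Bool)}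

lemma glue_cons_cond (b : Bool) :
    ∀ q : List Bool, q ≠ [] → (b :: q ∈ glue E₁ E₂ ↔ q ∈ (if b then E₂ else E₁)) :=
  fun _ hq => cons_mem_glue hq

lemma components_glue :
    components (node l r) (glue E₁ E₂) =
      insert {([] : List Bool)}
        (((components l E₁).image (Finset.image (List.cons false))) ∪
          ((components r E₂).image (Finset.image (List.cons true)))) := by
  have hpos : positions (node l r) =
      insert [] (((positions l).image (List.cons false)) ∪ ((positions r).image (List.cons true))) := rfl
  rw [components, hpos, Finset.image_insert, Finset.image_union, Finset.image_image,
    Finset.image_image]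
  rw [component_nil (single_mem_glue false E₁ E₂) (single_mem_glue true E₁ E₂)]
  congr 1
  congr 1
  · ext C
    simp only [Finset.mem_image, Function.comp_apply]
    constructor
    · rintro ⟨p, hp, rfl⟩
      exact ⟨component l E₁ p,
        Finset.mem_image.2 ⟨p, hp, rfl⟩,
        by rw [component_cons (single_mem_glue false E₁ E₂) (glue_cons_cond false) p]; rfl⟩
    · rintro ⟨C₀, hC₀, rfl⟩
      obtain ⟨p, hp, rfl⟩ := Finset.mem_image.1 hC₀
      exact ⟨p, hp,
        by rw [component_cons (single_mem_glue false E₁ E₂) (glue_cons_cond false) p]; rfl⟩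
  · ext C
    simp only [Finset.mem_image, Function.comp_apply]
    constructor
    · rintro ⟨p, hp, rfl⟩
      exact ⟨component r E₂ p,
        Finset.mem_image.2 ⟨p, hp, rfl⟩,
        by rw [component_cons (single_mem_glue true E₁ E₂) (glue_cons_cond true) p]; rfl⟩
    · rintro ⟨C₀, hC₀, rfl⟩
      obtain ⟨p, hp, rfl⟩ := Finset.mem_image.1 hC₀
      exact ⟨p, hp,
        by rw [component_cons (single_mem_glue true E₁ E₂) (glue_cons_cond true) p]; rfl⟩

lemma compEdgeCount_glue_nil :
    compEdgeCount (node l r) (glue E₁ E₂) {([] : List Bool)} = 0 := by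
  rw [compEdgeCount, Finset.card_eq_zero, Finset.filter_eq_empty_iff]
  rintro p hp ⟨-, hmem⟩
  rw [Finset.mem_singleton] at hmem
  subst hmem
  exact nil_not_mem_internalEdges _ hp

lemma compEdgeCount_glue_cons (hl : l.isNode) (hr : r.isNode) (b : Bool)
    (C : Finset (List Bool)) :
    compEdgeCount (node l r) (glue E₁ E₂) (Finset.image (List.cons b) C) =
      compEdgeCount (if b then r else l) (if b then E₂ else E₁) C := by
  rw [compEdgeCount, compEdgeCount]
  have himg : (internalEdges (node l r)).filter
        (fun p => p ∉ glue E₁ E₂ ∧ p ∈ Finset.image (List.cons b) C) =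
      Finset.image (List.cons b)
        ((internalEdges (if b then r else l)).filter
          (fun q => q ∉ (if b then E₂ else E₁) ∧ q ∈ C)) := by
    ext x
    simp only [Finset.mem_filter, Finset.mem_image]
    constructor
    · rintro ⟨hIE, hnE, q, hqC, rfl⟩
      rcases cons_mem_internalEdges_node.1 hIE with ⟨rfl, -⟩ | hq
      · exact absurd (single_mem_glue b E₁ E₂) hnE
      · have hqnil : q ≠ [] := by rintro rfl; exact nil_not_mem_internalEdges _ hq
        exact ⟨q, ⟨hq, fun h => hnE ((cons_mem_glue hqnil).2 h), hqC⟩, rfl⟩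
    · rintro ⟨q, ⟨hq, hnE, hqC⟩, rfl⟩
      have hqnil : q ≠ [] := by rintro rfl; exact nil_not_mem_internalEdges _ hq
      exact ⟨cons_mem_internalEdges_node.2 (Or.inr hq),
        fun h => hnE ((cons_mem_glue hqnil).1 h), q, hqC, rfl⟩
  rw [himg, Finset.card_image_of_injective _ (List.cons_injective)]

lemma components_nonempty {t : RTree α} {E : Finset (List Bool)} {C : Finset (List Bool)}
    (hC : C ∈ components t E) : C.Nonempty := by
  obtain ⟨p, hp, rfl⟩ := Finset.mem_image.1 hC
  exact ⟨p, self_mem_component hp⟩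

lemma beta_zero : beta 0 = 1 := by
  simp [beta, numBPT]

lemma NEdges_glue (hl : l.isNode) (hr : r.isNode) :
    NEdges (node l r) (glue E₁ E₂) = NEdges l E₁ * NEdges r E₂ := by
  rw [NEdges, components_glue]
  have hne1 : {([] : List Bool)} ∉
      ((components l E₁).image (Finset.image (List.cons false))) ∪
        ((components r E₂).image (Finset.image (List.cons true))) := by
    intro h
    rcases Finset.mem_union.1 h with h | h <;>
    · obtain ⟨C₀, hC₀, hC⟩ := Finset.mem_image.1 h
      obtain ⟨x, hx⟩ := components_nonempty hC₀
      have : _ ∈ ({([] : List Bool)} : Finset (List Bool)) := hC ▸ Finset.mem_image_of_mem _ hx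
      simp at this
  have hdisj : Disjoint ((components l E₁).image (Finset.image (List.cons false)))
      ((components r E₂).image (Finset.image (List.cons true))) := by
    rw [Finset.disjoint_left]
    rintro C hC hC'
    obtain ⟨C₀, hC₀, rfl⟩ := Finset.mem_image.1 hC
    obtain ⟨C₁, hC₁, hEq⟩ := Finset.mem_image.1 hC'
    obtain ⟨x, hx⟩ := components_nonempty hC₀
    have : false :: x ∈ Finset.image (List.cons true) C₁ := hEq ▸ Finset.mem_image_of_mem _ hx
    obtain ⟨y, -, hy⟩ := Finset.mem_image.1 this
    exact absurd hy (by simp)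
  rw [Finset.prod_insert hne1, Finset.prod_union hdisj, compEdgeCount_glue_nil, beta_zero,
    one_mul]
  congr 1
  · rw [Finset.prod_image (fun x _ y _ h => Finset.image_injective List.cons_injective h)]
    refine Finset.prod_congr rfl fun C hC => ?_
    rw [compEdgeCount_glue_cons hl hr false]; rfl
  · rw [Finset.prod_image (fun x _ y _ h => Finset.image_injective List.cons_injective h)]
    refine Finset.prod_congr rfl fun C hC => ?_
    rw [compEdgeCount_glue_cons hl hr true]; rfl

lemma kappa_glue : kappa (node l r) (glue E₁ E₂) = 0 := by
  rw [kappa, component_nil (single_mem_glue false E₁ E₂) (single_mem_glue true E₁ E₂)]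
  exact compEdgeCount_glue_nil

end Glue

section Decomp

variable {l r : RTree α} {E E₁ E₂ : Finset (List Bool)}

lemma single_mem_of_kappa_zero (b : Bool) (hb : (if b then r else l).isNode)
    (hk : kappa (node l r) E = 0) : [b] ∈ E := by
  by_contra h
  have hstep : stepRel E [] [b] := Or.inr ⟨rfl, by simp, h⟩
  have hpos : [b] ∈ positions (node l r) :=
    cons_mem_positions.2 (nil_mem_positions _)
  have hcomp : [b] ∈ component (node l r) E [] :=
    Finset.mem_filter.2 ⟨hpos, Relation.ReflTransGen.single hstep⟩
  have hIE : [b] ∈ internalEdges (node l r) :=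
    cons_mem_internalEdges_node.2 (Or.inl ⟨rfl, hb⟩)
  rw [kappa, compEdgeCount, Finset.card_eq_zero, Finset.filter_eq_empty_iff] at hk
  exact hk hIE ⟨h, hcomp⟩

lemma glue_decomp (hE : E ⊆ internalEdges (node l r)) (hf : [false] ∈ E) (ht : [true] ∈ E) :
    glue ((internalEdges l).filter (fun q => false :: q ∈ E))
        ((internalEdges r).filter (fun q => true :: q ∈ E)) = E := by
  ext x
  constructor
  · intro hx
    rcases Finset.mem_insert.1 hx with rfl | hx
    · exact hf
    rcases Finset.mem_insert.1 hx with rfl | hx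
    · exact ht
    rcases Finset.mem_union.1 hx with hx | hx <;>
    · obtain ⟨q, hq, rfl⟩ := Finset.mem_image.1 hx
      exact (Finset.mem_filter.1 hq).2
  · intro hx
    have hx' := hE hx
    match x with
    | [] => exact absurd hx' (nil_not_mem_internalEdges _)
    | b :: q =>
      rcases cons_mem_internalEdges_node.1 hx' with ⟨rfl, -⟩ | hq
      · exact single_mem_glue b _ _
      · have : q ∈ (if b then (internalEdges r).filter (fun q => true :: q ∈ E)
            else (internalEdges l).filter (fun q => false :: q ∈ E)) := by
          cases b <;> exact Finset.mem_filter.2 ⟨hq, hx⟩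
        have hqnil : q ≠ [] := by rintro rfl; exact nil_not_mem_internalEdges _ hq
        exact (cons_mem_glue hqnil).2 this

lemma card_glue (h₁ : [] ∉ E₁) (h₂ : [] ∉ E₂) :
    (glue E₁ E₂).card = E₁.card + E₂.card + 2 := by
  have hf : [false] ∉ insert [true] (E₁.image (List.cons false) ∪ E₂.image (List.cons true)) := by
    simp only [Finset.mem_insert, Finset.mem_union, Finset.mem_image]
    rintro (h | ⟨q, hq, hq'⟩ | ⟨q, hq, hq'⟩)
    · simp at h
    · obtain rfl : q = [] := by simpa using hq'
      exact h₁ hq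
    · exact absurd hq' (by simp)
  have ht : [true] ∉ E₁.image (List.cons false) ∪ E₂.image (List.cons true) := by
    simp only [Finset.mem_union, Finset.mem_image]
    rintro (⟨q, hq, hq'⟩ | ⟨q, hq, hq'⟩)
    · exact absurd hq' (by simp)
    · obtain rfl : q = [] := by simpa using hq'
      exact h₂ hq
  have hdisj : Disjoint (E₁.image (List.cons false)) (E₂.image (List.cons true)) := by
    rw [Finset.disjoint_left]
    rintro x hx hx'
    obtain ⟨q, -, rfl⟩ := Finset.mem_image.1 hx
    obtain ⟨q', -, h⟩ := Finset.mem_image.1 hx'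
    exact absurd h (by simp)
  rw [glue, Finset.card_insert_of_notMem hf, Finset.card_insert_of_notMem ht,
    Finset.card_union_of_disjoint hdisj,
    Finset.card_image_of_injective _ List.cons_injective,
    Finset.card_image_of_injective _ List.cons_injective]

lemma nil_not_mem_of_subset (h : E₁ ⊆ internalEdges l) : [] ∉ E₁ :=
  fun hx => nil_not_mem_internalEdges _ (h hx)

lemma glue_subset (hl : l.isNode) (hr : r.isNode)
    (h₁ : E₁ ⊆ internalEdges l) (h₂ : E₂ ⊆ internalEdges r) :
    glue E₁ E₂ ⊆ internalEdges (node l r) := by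
  intro x hx
  rcases Finset.mem_insert.1 hx with rfl | hx
  · exact cons_mem_internalEdges_node.2 (Or.inl ⟨rfl, hl⟩)
  rcases Finset.mem_insert.1 hx with rfl | hx
  · exact cons_mem_internalEdges_node.2 (Or.inl ⟨rfl, hr⟩)
  rcases Finset.mem_union.1 hx with hx | hx <;> obtain ⟨q, hq, rfl⟩ := Finset.mem_image.1 hx
  · exact cons_mem_internalEdges_node.2 (Or.inr (h₁ hq))
  · exact cons_mem_internalEdges_node.2 (Or.inr (h₂ hq))

lemma filter_glue_left (h₁ : E₁ ⊆ internalEdges l) :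
    (internalEdges l).filter (fun q => false :: q ∈ glue E₁ E₂) = E₁ := by
  ext q
  simp only [Finset.mem_filter]
  constructor
  · rintro ⟨hq, hmem⟩
    have hqnil : q ≠ [] := by rintro rfl; exact nil_not_mem_internalEdges _ hq
    simpa using (cons_mem_glue hqnil).1 hmem
  · intro hq
    have hqnil : q ≠ [] := by rintro rfl; exact nil_not_mem_internalEdges _ (h₁ hq)
    exact ⟨h₁ hq, (cons_mem_glue hqnil).2 (by simpa using hq)⟩

lemma filter_glue_right (h₂ : E₂ ⊆ internalEdges r) :
    (internalEdges r).filter (fun q => true :: q ∈ glue E₁ E₂) = E₂ := by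
  ext q
  simp only [Finset.mem_filter]
  constructor
  · rintro ⟨hq, hmem⟩
    have hqnil : q ≠ [] := by rintro rfl; exact nil_not_mem_internalEdges _ hq
    simpa using (cons_mem_glue hqnil).1 hmem
  · intro hq
    have hqnil : q ≠ [] := by rintro rfl; exact nil_not_mem_internalEdges _ (h₂ hq)
    exact ⟨h₂ hq, (cons_mem_glue hqnil).2 (by simpa using hq)⟩

end Decomp

lemma kappa_le (t : RTree α) (E : Finset (List Bool)) :
    kappa t E ≤ (internalEdges t).card :=
  Finset.card_le_card (Finset.filter_subset _ _)

lemma R_sum_kappa (t : RTree α) (s : ℕ) :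
    ∑ k ∈ Finset.range ((internalEdges t).card + 1), R t s k =
      ∑ E ∈ (internalEdges t).powerset.filter (fun E => E.card = s), NEdges t E := by
  rw [← Finset.sum_fiberwise_of_maps_to
    (g := kappa t) (t := Finset.range ((internalEdges t).card + 1))
    (fun E _ => Finset.mem_range.2 (Nat.lt_succ_of_le (kappa_le t E))) (NEdges t)]
  refine Finset.sum_congr rfl fun k _ => ?_
  rw [R, Finset.filter_filter]

end StatementFiveAux

open RTree

/-- Let `T ∈ BPT(n)`, rooted as described, and let `v` be an internal
vertex with two internal children `v₁` and `v₂`.  Then for every `s ≥ 1`: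
`R(v,s,0) = ∑_{s₁=0}^{s-2} (∑_{k₁ ≥ 0} R(v₁,s₁,k₁)) · (∑_{k₂ ≥ 0} R(v₂,s-2-s₁,k₂))`,
where an empty sum equals zero.  (The inner sums over `k₁, k₂ ≥ 0` are finite, since
`R(vᵢ,·,kᵢ) = 0` for `kᵢ > n_{vᵢ} = |E̊(T_{vᵢ})|`.) -/
theorem R_rec_two_internal_children_zero (n : ℕ) (hn : 3 ≤ n) (t : RTree (Fin (n - 1)))
    (hnodup : t.labels.Nodup) (hcard : Multiset.card t.labels = n - 1)
    (p : List Bool) (tv v₁ v₂ : RTree (Fin (n - 1)))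
    (hp : t.subtreeAt p = some tv) (htv : tv = RTree.node v₁ v₂)
    (h₁ : v₁.isNode) (h₂ : v₂.isNode)
    (s : ℕ) (hs : 1 ≤ s) :
    R tv s 0 =
      ∑ s₁ ∈ Finset.range (s - 1),
        (∑ k₁ ∈ Finset.range ((internalEdges v₁).card + 1), R v₁ s₁ k₁) *
          (∑ k₂ ∈ Finset.range ((internalEdges v₂).card + 1), R v₂ (s - 2 - s₁) k₂) := by
  classical
  subst htv
  set B := (((internalEdges v₁).powerset ×ˢ (internalEdges v₂).powerset).filter
      (fun q => q.1.card + q.2.card + 2 = s)) with hB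
  have hLB : R (RTree.node v₁ v₂) s 0 = ∑ q ∈ B, NEdges v₁ q.1 * NEdges v₂ q.2 := by
    rw [R]
    refine Finset.sum_nbij'
      (i := fun E => ((internalEdges v₁).filter (fun q => false :: q ∈ E),
        (internalEdges v₂).filter (fun q => true :: q ∈ E)))
      (j := fun q => StatementFiveAux.glue q.1 q.2) ?_ ?_ ?_ ?_ ?_
    · intro E hE
      rw [Finset.mem_filter, Finset.mem_powerset] at hE
      obtain ⟨hsub, hcard, hkappa⟩ := hE
      have hf : [false] ∈ E := StatementFiveAux.single_mem_of_kappa_zero false h₁ hkappa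
      have ht : [true] ∈ E := StatementFiveAux.single_mem_of_kappa_zero true h₂ hkappa
      have hdec := StatementFiveAux.glue_decomp hsub hf ht
      rw [hB, Finset.mem_filter, Finset.mem_product, Finset.mem_powerset, Finset.mem_powerset]
      refine ⟨⟨Finset.filter_subset _ _, Finset.filter_subset _ _⟩, ?_⟩
      have hcg := StatementFiveAux.card_glue
        (StatementFiveAux.nil_not_mem_of_subset (E₁ := (internalEdges v₁).filter
          (fun q => false :: q ∈ E)) (Finset.filter_subset _ _))
        (StatementFiveAux.nil_not_mem_of_subset (E₁ := (internalEdges v₂).filter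
          (fun q => true :: q ∈ E)) (Finset.filter_subset _ _))
      rw [hdec, hcard] at hcg
      dsimp only
      omega
    · intro q hq
      rw [hB, Finset.mem_filter, Finset.mem_product, Finset.mem_powerset, Finset.mem_powerset] at hq
      obtain ⟨⟨hq1, hq2⟩, hcard⟩ := hq
      rw [Finset.mem_filter, Finset.mem_powerset]
      refine ⟨StatementFiveAux.glue_subset h₁ h₂ hq1 hq2, ?_, StatementFiveAux.kappa_glue⟩
      rw [StatementFiveAux.card_glue (StatementFiveAux.nil_not_mem_of_subset hq1)
        (StatementFiveAux.nil_not_mem_of_subset hq2)]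
      omega
    · intro E hE
      rw [Finset.mem_filter, Finset.mem_powerset] at hE
      exact StatementFiveAux.glue_decomp hE.1
        (StatementFiveAux.single_mem_of_kappa_zero false h₁ hE.2.2)
        (StatementFiveAux.single_mem_of_kappa_zero true h₂ hE.2.2)
    · intro q hq
      rw [hB, Finset.mem_filter, Finset.mem_product, Finset.mem_powerset, Finset.mem_powerset] at hq
      obtain ⟨⟨hq1, hq2⟩, -⟩ := hq
      have h1 := StatementFiveAux.filter_glue_left (E₂ := q.2) hq1
      have h2 := StatementFiveAux.filter_glue_right (E₁ := q.1) hq2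
      rw [h1, h2]
    · intro E hE
      rw [Finset.mem_filter, Finset.mem_powerset] at hE
      have hdec := StatementFiveAux.glue_decomp hE.1
        (StatementFiveAux.single_mem_of_kappa_zero false h₁ hE.2.2)
        (StatementFiveAux.single_mem_of_kappa_zero true h₂ hE.2.2)
      conv_lhs => rw [← hdec]
      exact StatementFiveAux.NEdges_glue h₁ h₂
  rw [hLB]
  -- now split B by the cardinality of the first component
  have hmap : ∀ q ∈ B, (fun q : Finset (List Bool) × Finset (List Bool) => q.1.card) q ∈
      Finset.range (s - 1) := by
    intro q hq
    rw [hB] at hq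
    simp only [Finset.mem_filter, Finset.mem_product, Finset.mem_powerset] at hq
    dsimp only
    rw [Finset.mem_range]
    omega
  rw [← Finset.sum_fiberwise_of_maps_to hmap (fun q => NEdges v₁ q.1 * NEdges v₂ q.2)]
  refine Finset.sum_congr rfl fun s₁ hs₁ => ?_
  rw [Finset.mem_range] at hs₁
  rw [StatementFiveAux.R_sum_kappa, StatementFiveAux.R_sum_kappa]
  have hfiber : B.filter (fun q => q.1.card = s₁) =
      ((internalEdges v₁).powerset.filter (fun E => E.card = s₁)) ×ˢ
        ((internalEdges v₂).powerset.filter (fun E => E.card = s - 2 - s₁)) := by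
    ext q
    rw [hB]
    simp only [Finset.mem_filter, Finset.mem_product, Finset.mem_powerset]
    constructor
    · rintro ⟨⟨⟨hq1, hq2⟩, hsum⟩, hcard⟩
      exact ⟨⟨hq1, hcard⟩, hq2, by omega⟩
    · rintro ⟨⟨hq1, hcard1⟩, hq2, hcard2⟩
      exact ⟨⟨⟨hq1, hq2⟩, by omega⟩, hcard1⟩
  rw [hfiber, Finset.sum_product, Finset.sum_mul_sum]
end

section
/- There exists a constant C > 0 such that for all integers n ≥ 4, all integers c with 1 ≤ c ≤ n/2, and all integers r with 0 ≤ r ≤ n−2: (c/(2n))^r · | (∏_{i=1}^{r−1} (1 − i/c)) / (∏_{j=1}^{r} (1 − (2j+3)/(2n))) − 1 | ≤ C/n, where empty products equal 1. -/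
open Finset

lemma weier (s : Finset ℕ) (f : ℕ → ℝ) (h0 : ∀ i ∈ s, 0 ≤ f i) (h1 : ∀ i ∈ s, f i ≤ 1) :
    1 - ∑ i ∈ s, f i ≤ ∏ i ∈ s, (1 - f i) := by
  induction s using Finset.cons_induction with
  | empty => simp
  | cons a s ha ih =>
    rw [Finset.sum_cons, Finset.prod_cons]
    have h0a := h0 a (Finset.mem_cons_self a s)
    have h1a := h1 a (Finset.mem_cons_self a s)
    have ih' := ih (fun i hi => h0 i (Finset.mem_cons_of_mem hi))
      (fun i hi => h1 i (Finset.mem_cons_of_mem hi))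
    have hs0 : 0 ≤ ∑ i ∈ s, f i := Finset.sum_nonneg (fun i hi => h0 i (Finset.mem_cons_of_mem hi))
    nlinarith [ih', hs0, h0a, h1a]

lemma sq_le_pow (r : ℕ) : (r : ℝ)^2 ≤ 100 * (3/2)^r := by
  induction r with
  | zero => norm_num
  | succ m ih =>
    have h1 : (1:ℝ) ≤ (3/2)^m := one_le_pow₀ (by norm_num)
    have : (3:ℝ)/2 * (3/2)^m = (3/2)^(m+1) := by ring
    push_cast
    nlinarith [sq_nonneg ((m:ℝ) - 5/2), ih, h1]

set_option maxHeartbeats 2000000 in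
/-- There is a constant `C > 0` such that for all integers `n ≥ 4`,
all integers `c` with `1 ≤ c ≤ n/2` and all integers `r` with `0 ≤ r ≤ n-2`:
`(c/(2n))^r · |(∏_{i=1}^{r-1} (1 - i/c)) / (∏_{j=1}^{r} (1 - (2j+3)/(2n))) - 1| ≤ C/n`
(empty products equal `1`). -/
theorem f_n_r_le_C_div_n :
    ∃ C : ℝ, 0 < C ∧ ∀ n : ℕ, 4 ≤ n → ∀ c : ℕ, 1 ≤ c → (c : ℝ) ≤ (n : ℝ) / 2 →
      ∀ r : ℕ, r ≤ n - 2 →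
        ((c : ℝ) / (2 * n)) ^ r *
            |(∏ i ∈ Finset.Icc 1 (r - 1), (1 - (i : ℝ) / c)) /
                (∏ j ∈ Finset.Icc 1 r, (1 - (2 * (j : ℝ) + 3) / (2 * n))) - 1| ≤
          C / n := by
  refine ⟨2000, by norm_num, ?_⟩
  intro n hn c hc1 hc2 r hr
  have hn4 : (4:ℝ) ≤ (n:ℝ) := by exact_mod_cast hn
  have hn0 : (0:ℝ) < (n:ℝ) := by linarith
  have h2n : (0:ℝ) < 2*(n:ℝ) := by linarith
  have hcpos : (0:ℝ) < (c:ℝ) := by exact_mod_cast hc1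
  have hn3 : (0:ℝ) < (n:ℝ) - 3 := by linarith
  -- r = 0 case
  rcases Nat.eq_zero_or_pos r with hr0 | hr1
  · subst hr0
    simp only [pow_zero, one_mul, Nat.zero_sub, Finset.Icc_eq_empty_of_lt (by norm_num : (1:ℕ) > 0),
      Finset.prod_empty]
    norm_num
    positivity
  obtain ⟨m, rfl⟩ : ∃ m, r = m + 1 := ⟨r - 1, by omega⟩
  simp only [Nat.add_sub_cancel]
  set P := ∏ i ∈ Finset.Icc 1 m, (1 - (i : ℝ) / c) with hPdef
  set Q := ∏ j ∈ Finset.Icc 1 (m+1), (1 - (2 * (j : ℝ) + 3) / (2 * n)) with hQdef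
  have hfac : ∀ j ∈ Finset.Icc 1 (m+1), 0 < 1 - (2 * (j : ℝ) + 3) / (2 * n) := by
    intro j hj
    have hjr : j + 2 ≤ n := by
      have := (Finset.mem_Icc.mp hj).2; omega
    have hjr' : (j:ℝ) + 2 ≤ (n:ℝ) := by exact_mod_cast hjr
    have : (2 * (j : ℝ) + 3) / (2 * n) < 1 := by
      rw [div_lt_one h2n]; linarith
    linarith
  have hxnn : ∀ j ∈ Finset.Icc 1 (m+1), 0 ≤ (2 * (j : ℝ) + 3) / (2 * n) := by
    intro j hj; positivity
  have hQpos : 0 < Q := Finset.prod_pos hfac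
  have hQ1 : Q ≤ 1 :=
    Finset.prod_le_one (fun j hj => (hfac j hj).le) (fun j hj => by linarith [hxnn j hj])
  rcases le_or_gt (m + 1) c with hrc | hrc
  · -- Case B : r ≤ c
    have hcr : ((m:ℝ) + 1) ≤ (c:ℝ) := by exact_mod_cast hrc
    have hPfac0 : ∀ i ∈ Finset.Icc 1 m, 0 ≤ (i:ℝ)/c := by intro i hi; positivity
    have hPfac1 : ∀ i ∈ Finset.Icc 1 m, (i:ℝ)/c ≤ 1 := by
      intro i hi
      rw [div_le_one hcpos]
      have : i ≤ c := by have := (Finset.mem_Icc.mp hi).2; omega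
      exact_mod_cast this
    have hP0 : 0 ≤ P := Finset.prod_nonneg (fun i hi => by linarith [hPfac1 i hi])
    have hP1 : P ≤ 1 := Finset.prod_le_one (fun i hi => by linarith [hPfac1 i hi])
      (fun i hi => by linarith [hPfac0 i hi])
    -- Weierstrass bounds
    have h1P : 1 - P ≤ ((m:ℝ)+1)^2 / c := by
      have hw := weier (Finset.Icc 1 m) (fun i => (i:ℝ)/c) hPfac0 hPfac1
      have hsum : ∑ i ∈ Finset.Icc 1 m, (i:ℝ)/c ≤ ((m:ℝ)+1)^2 / c := by
        have hb : ∀ i ∈ Finset.Icc 1 m, (i:ℝ)/c ≤ ((m:ℝ)+1)/c := by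
          intro i hi
          have : (i:ℝ) ≤ (m:ℝ)+1 := by
            have := (Finset.mem_Icc.mp hi).2
            have : (i:ℝ) ≤ (m:ℝ) := by exact_mod_cast this
            linarith
          gcongr
        calc ∑ i ∈ Finset.Icc 1 m, (i:ℝ)/c ≤ (Finset.Icc 1 m).card • (((m:ℝ)+1)/c) :=
              Finset.sum_le_card_nsmul _ _ _ hb
          _ = (m:ℝ) * (((m:ℝ)+1)/c) := by
              rw [Nat.card_Icc, nsmul_eq_mul]; norm_num
          _ ≤ ((m:ℝ)+1) * (((m:ℝ)+1)/c) := by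
              have hmn : (0:ℝ) ≤ ((m:ℝ)+1)/c := by positivity
              nlinarith
          _ = ((m:ℝ)+1)^2 / c := by ring
      linarith
    have h1Q : 1 - Q ≤ ((m:ℝ)+1) * (2*((m:ℝ)+1)+3) / (2*n) := by
      have hw := weier (Finset.Icc 1 (m+1)) (fun j => (2 * (j : ℝ) + 3) / (2 * n)) hxnn
        (fun j hj => by linarith [hfac j hj])
      have hsum : ∑ j ∈ Finset.Icc 1 (m+1), (2 * (j : ℝ) + 3) / (2 * n)
          ≤ ((m:ℝ)+1) * (2*((m:ℝ)+1)+3) / (2*n) := by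
        have hb : ∀ j ∈ Finset.Icc 1 (m+1), (2 * (j : ℝ) + 3) / (2 * n)
            ≤ (2*((m:ℝ)+1)+3) / (2*n) := by
          intro j hj
          have : (j:ℝ) ≤ (m:ℝ)+1 := by exact_mod_cast (Finset.mem_Icc.mp hj).2
          gcongr
        calc ∑ j ∈ Finset.Icc 1 (m+1), (2 * (j : ℝ) + 3) / (2 * n)
            ≤ (Finset.Icc 1 (m+1)).card • ((2*((m:ℝ)+1)+3) / (2*n)) :=
              Finset.sum_le_card_nsmul _ _ _ hb
          _ = ((m:ℝ)+1) * ((2*((m:ℝ)+1)+3) / (2*n)) := by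
              rw [Nat.card_Icc, nsmul_eq_mul]; push_cast; ring
          _ = ((m:ℝ)+1) * (2*((m:ℝ)+1)+3) / (2*n) := by ring
      linarith
    have habs : |P - Q| ≤ (1-P) + (1-Q) := by
      rw [abs_le]; constructor <;> linarith
    -- key product bound
    have hkey : ((c:ℝ)/(2*n))^(m+1) ≤ (2/3:ℝ)^m * ((c:ℝ)/((n:ℝ)-3)) * Q := by
      have hQsplit : Q = (∏ j ∈ Finset.Icc 1 m, (1 - (2 * (j : ℝ) + 3) / (2 * n))) *
          (1 - (2 * ((m:ℝ)+1) + 3) / (2 * n)) := by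
        rw [hQdef, Finset.prod_Icc_succ_top (by omega : 1 ≤ m + 1)]
        simp only [Nat.cast_add, Nat.cast_one]
      set Q' := ∏ j ∈ Finset.Icc 1 m, (1 - (2 * (j : ℝ) + 3) / (2 * n)) with hQ'def
      have hb0 : (0:ℝ) ≤ (c:ℝ)/(2*n) := by positivity
      have h1 : ((c:ℝ)/(2*n))^m ≤ (2/3:ℝ)^m * Q' := by
        have perfac : ∀ j ∈ Finset.Icc 1 m, (c:ℝ)/(2*n) ≤ (2/3) * (1 - (2 * (j : ℝ) + 3) / (2 * n)) := by
          intro j hj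
          have hj' : (j:ℝ) ≤ (c:ℝ) - 1 := by
            have : j + 1 ≤ c := by have := (Finset.mem_Icc.mp hj).2; omega
            have : (j:ℝ) + 1 ≤ (c:ℝ) := by exact_mod_cast this
            linarith
          rw [div_le_iff₀ h2n]
          have e : 2/3 * (1 - (2 * (j:ℝ) + 3) / (2 * n)) * (2*n) = 2/3 * (2*n - (2*j+3)) := by
            field_simp
          rw [e]; linarith
        calc ((c:ℝ)/(2*n))^m = ∏ _j ∈ Finset.Icc 1 m, ((c:ℝ)/(2*n)) := by
              rw [Finset.prod_const, Nat.card_Icc]; norm_num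
          _ ≤ ∏ j ∈ Finset.Icc 1 m, ((2/3) * (1 - (2 * (j : ℝ) + 3) / (2 * n))) :=
              Finset.prod_le_prod (fun j hj => hb0) perfac
          _ = (2/3:ℝ)^m * Q' := by
              rw [Finset.prod_mul_distrib, Finset.prod_const, Nat.card_Icc]; norm_num; rfl
      have h2 : (c:ℝ)/(2*n) ≤ ((c:ℝ)/((n:ℝ)-3)) * (1 - (2 * ((m:ℝ)+1) + 3) / (2 * n)) := by
        have e1 : (c:ℝ)/(2*n) = ((c:ℝ)/((n:ℝ)-3)) * (((n:ℝ)-3)/(2*n)) := by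
          field_simp
        rw [e1]
        apply mul_le_mul_of_nonneg_left _ (by positivity)
        have e2 : 1 - (2 * ((m:ℝ)+1) + 3) / (2 * n) = (2*(n:ℝ) - (2*((m:ℝ)+1)+3))/(2*n) := by
          field_simp
        rw [e2]
        apply (div_le_div_iff_of_pos_right h2n).mpr
        linarith
      have hQ'pos : 0 < Q' := Finset.prod_pos (fun j hj => hfac j (by
        simp only [Finset.mem_Icc] at hj ⊢; omega))
      calc ((c:ℝ)/(2*n))^(m+1) = ((c:ℝ)/(2*n))^m * ((c:ℝ)/(2*n)) := by rw [pow_succ]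
        _ ≤ ((2/3:ℝ)^m * Q') * (((c:ℝ)/((n:ℝ)-3)) * (1 - (2 * ((m:ℝ)+1) + 3) / (2 * n))) := by
            apply mul_le_mul h1 h2 hb0 (by positivity)
        _ = (2/3:ℝ)^m * ((c:ℝ)/((n:ℝ)-3)) * Q := by rw [hQsplit]; ring
    -- final assembly
    have hgoal : P / Q - 1 = (P - Q)/Q := by field_simp
    rw [hgoal, abs_div, abs_of_pos hQpos, ← mul_div_assoc, div_le_iff₀ hQpos]
    have hcD : (c:ℝ) * ((1-P)+(1-Q)) ≤ (9/4) * ((m:ℝ)+1)^2 := by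
      have hA : (1 - P) * c ≤ ((m:ℝ)+1)^2 := (le_div_iff₀ hcpos).mp h1P
      have hB : (1 - Q) * (2*n) ≤ ((m:ℝ)+1) * (2*((m:ℝ)+1)+3) := (le_div_iff₀ h2n).mp h1Q
      have hm0 : (0:ℝ) ≤ (m:ℝ) := by positivity
      nlinarith [mul_nonneg (by linarith : (0:ℝ) ≤ (n:ℝ)/2 - c) (by linarith : (0:ℝ) ≤ 1 - Q),
        mul_nonneg hm0 (by linarith : (0:ℝ) ≤ (m:ℝ)+1)]
    have hBr : (2/3:ℝ)^m * ((m:ℝ)+1)^2 ≤ 150 := by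
      have hsq := sq_le_pow (m+1)
      have hBpos : (0:ℝ) < (2/3:ℝ)^m := by positivity
      have hBG : (2/3:ℝ)^m * (3/2:ℝ)^(m+1) = 3/2 := by
        rw [pow_succ, ← mul_assoc, ← mul_pow]; norm_num
      have hsq' : ((m:ℝ)+1)^2 ≤ 100 * (3/2:ℝ)^(m+1) := by push_cast at hsq; linarith
      calc (2/3:ℝ)^m * ((m:ℝ)+1)^2 ≤ (2/3:ℝ)^m * (100 * (3/2:ℝ)^(m+1)) := by
            apply mul_le_mul_of_nonneg_left hsq' hBpos.le
        _ = 100 * ((2/3:ℝ)^m * (3/2:ℝ)^(m+1)) := by ring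
        _ = 150 := by rw [hBG]; norm_num
    calc ((c:ℝ)/(2*n))^(m+1) * |P - Q|
        ≤ ((2/3:ℝ)^m * ((c:ℝ)/((n:ℝ)-3)) * Q) * ((1-P)+(1-Q)) := by
          apply mul_le_mul hkey habs (abs_nonneg _) (by positivity)
      _ = ((2/3:ℝ)^m * ((c:ℝ) * ((1-P)+(1-Q)))) * Q / ((n:ℝ)-3) := by ring
      _ ≤ ((2/3:ℝ)^m * ((9/4) * ((m:ℝ)+1)^2)) * Q / ((n:ℝ)-3) := by
          gcongr
      _ = ((9/4) * ((2/3:ℝ)^m * ((m:ℝ)+1)^2)) * Q / ((n:ℝ)-3) := by ring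
      _ ≤ ((9/4) * 150) * Q / ((n:ℝ)-3) := by gcongr
      _ ≤ 2000 / n * Q := by
          have : ((9/4:ℝ) * 150) * Q / ((n:ℝ)-3) = (337.5/((n:ℝ)-3)) * Q := by ring
          rw [this]
          apply mul_le_mul_of_nonneg_right _ hQpos.le
          rw [div_le_div_iff₀ hn3 hn0]
          linarith
  · -- Case A : c < r, so P = 0
    have hcm : c ∈ Finset.Icc 1 m := Finset.mem_Icc.mpr ⟨hc1, by omega⟩
    have hPz : P = 0 := Finset.prod_eq_zero hcm (by field_simp; norm_num)
    rw [hPz]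
    rw [zero_div, zero_sub, abs_neg, abs_one, mul_one]
    have hb0 : (0:ℝ) ≤ (c:ℝ)/(2*n) := by positivity
    have hb1 : (c:ℝ)/(2*n) ≤ 1/4 := by
      rw [div_le_div_iff₀ h2n (by norm_num)]; linarith
    have h1 : ((c:ℝ)/(2*n))^(m+1) ≤ ((c:ℝ)/(2*n))^(c+1) :=
      pow_le_pow_of_le_one hb0 (by linarith) (by omega)
    have h3 : ((c:ℝ)/(2*n))^c ≤ (1/4:ℝ)^c := pow_le_pow_left₀ hb0 hb1 c
    have h4 : (c:ℝ) ≤ 4^c := by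
      have h := Nat.lt_two_pow_self (n := c)
      have h' : (c:ℝ) < 2^c := by exact_mod_cast h
      have : (2:ℝ)^c ≤ 4^c := pow_le_pow_left₀ (by norm_num) (by norm_num) c
      linarith
    have h5 : (1/4:ℝ)^c * (c:ℝ) ≤ 1 := by
      rw [div_pow, one_pow, div_mul_eq_mul_div, one_mul, div_le_one (by positivity)]
      exact h4
    calc ((c:ℝ)/(2*n))^(m+1) ≤ ((c:ℝ)/(2*n))^(c+1) := h1
      _ = ((c:ℝ)/(2*n)) * ((c:ℝ)/(2*n))^c := by rw [pow_succ]; ring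
      _ ≤ ((c:ℝ)/(2*n)) * (1/4:ℝ)^c := by
          apply mul_le_mul_of_nonneg_left h3 hb0
      _ = ((1/4:ℝ)^c * (c:ℝ)) * (1/(2*n)) := by ring
      _ ≤ 1 * (1/(2*n)) := by
          apply mul_le_mul_of_nonneg_right h5 (by positivity)
      _ ≤ 2000 / n := by
          rw [one_mul, div_le_div_iff₀ h2n hn0]
          nlinarith
end
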